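/- Fix β>0 and θ∈ℝ. For all t,r>0, u≥0 and every x≥0, one has e^{−x c^θ_t} · e^{c̃^θ_{u+t+r}·0} + ∫_0^∞ e^{c̃^θ_{u+t+r} y} q^θ_t(x,y) dy = e^{c̃^θ_{u+r} x}; that is, the space–time function (t,z) ↦ e^{c̃^θ_{t+r} z} is harmonic for the CSBP kernels (here the extinction atom at 0 contributes e^{−x c^θ_t}). -/

import Mathlib

open MeasureTheory Filter

/-- `c^θ_t` from the paper, with time-scale parameter `β`. -/
noncomputable def cc (β θ t : ℝ) : ℝ :=
  if θ = 0 then 1 / (β * t) else 2 * θ / (Real.exp (2 * β * θ * t) - 1)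

/-- `c̃^θ_t` from the paper. -/
noncomputable def cct (β θ t : ℝ) : ℝ :=
  if θ = 0 then 1 / (β * t) else 2 * θ / (1 - Real.exp (-(2 * β * θ * t)))

/-- `u^θ(λ, t)` from the paper. -/
noncomputable def uu (β θ l t : ℝ) : ℝ :=
  if t = 0 then l else l * cc β θ t / (cct β θ t + l)

/-- entrance density `q^θ_t(x)`. -/
noncomputable def qe (β θ t x : ℝ) : ℝ :=
  cc β θ t * cct β θ t * Real.exp (-(cct β θ t * x))

/-- transition density `q^θ_t(x, y)`. -/
noncomputable def qt (β θ t x y : ℝ) : ℝ :=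
  x * cc β θ t * cct β θ t * Real.exp (-((x + y) * cc β θ t) - 2 * θ * y) *
    ∑' k : ℕ, (x * y * cc β θ t * cct β θ t) ^ k /
      ((Nat.factorial k : ℝ) * (Nat.factorial (k + 1) : ℝ))

/-- the space-time harmonic function `m^{α,θ}(t, z)`. -/
noncomputable def mm (β θ α t z : ℝ) : ℝ :=
  z * Real.exp (-(α / cc β θ t)) *
    ∑' i : ℕ, (α * z) ^ i * Real.exp (((i : ℝ) + 1) * (2 * β * θ * t)) /
      ((Nat.factorial i : ℝ) * (Nat.factorial (i + 1) : ℝ))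

/-- the space-time harmonic function `m̃^{α,θ}(t, z)`. -/
noncomputable def mmt (β θ α t z : ℝ) : ℝ :=
  z * Real.exp (2 * θ * z) * Real.exp (-(α / cct β θ t)) *
    ∑' i : ℕ, (α * z) ^ i * Real.exp (-(((i : ℝ) + 1) * (2 * β * θ * t))) /
      ((Nat.factorial i : ℝ) * (Nat.factorial (i + 1) : ℝ))

/- ------------------  auxiliary lemmas ------------------ -/

lemma exp_ne_one_aux {β θ τ : ℝ} (hβ : 0 < β) (h : θ ≠ 0) (hτ : 0 < τ) :
    Real.exp (2 * β * θ * τ) ≠ 1 := by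
  intro hc
  rw [Real.exp_eq_one_iff] at hc
  rcases h.lt_or_gt with hθ | hθ
  · nlinarith [mul_pos hβ hτ]
  · nlinarith [mul_pos hβ hτ]

lemma cc_pos {β θ t : ℝ} (hβ : 0 < β) (ht : 0 < t) : 0 < cc β θ t := by
  unfold cc
  rcases eq_or_ne θ 0 with h | h
  · rw [if_pos h]; positivity
  · rw [if_neg h]
    rcases h.lt_or_gt with hθ | hθ
    · have hlt : Real.exp (2 * β * θ * t) < 1 := by
        rw [show (1:ℝ) = Real.exp 0 by simp]
        exact Real.exp_lt_exp.mpr (by nlinarith [mul_pos hβ ht])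
      exact div_pos_of_neg_of_neg (by linarith) (by linarith)
    · have hlt : 1 < Real.exp (2 * β * θ * t) := by
        rw [show (1:ℝ) = Real.exp 0 by simp]
        exact Real.exp_lt_exp.mpr (by nlinarith [mul_pos hβ ht])
      exact div_pos (by linarith) (by linarith)

lemma cct_pos {β θ t : ℝ} (hβ : 0 < β) (ht : 0 < t) : 0 < cct β θ t := by
  unfold cct
  rcases eq_or_ne θ 0 with h | h
  · rw [if_pos h]; positivity
  · rw [if_neg h]
    rcases h.lt_or_gt with hθ | hθ
    · have hlt : 1 < Real.exp (-(2 * β * θ * t)) := by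
        rw [show (1:ℝ) = Real.exp 0 by simp]
        exact Real.exp_lt_exp.mpr (by nlinarith [mul_pos hβ ht])
      exact div_pos_of_neg_of_neg (by linarith) (by linarith)
    · have hlt : Real.exp (-(2 * β * θ * t)) < 1 := by
        rw [show (1:ℝ) = Real.exp 0 by simp]
        exact Real.exp_lt_exp.mpr (by nlinarith [mul_pos hβ ht])
      exact div_pos (by linarith) (by linarith)

/-- `c̃ = c + 2θ`. -/
lemma cct_eq_cc_add {β θ t : ℝ} (hβ : 0 < β) (ht : 0 < t) :
    cct β θ t = cc β θ t + 2 * θ := by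
  unfold cc cct
  rcases eq_or_ne θ 0 with h | h
  · rw [if_pos h, if_pos h, h]; ring
  · rw [if_neg h, if_neg h]
    have hE0 : Real.exp (2 * β * θ * t) ≠ 0 := Real.exp_ne_zero _
    have hE1 : Real.exp (2 * β * θ * t) ≠ 1 := exp_ne_one_aux hβ h ht
    have h1 : Real.exp (2 * β * θ * t) - 1 ≠ 0 := sub_ne_zero.mpr hE1
    rw [Real.exp_neg]
    have h2 : (1 : ℝ) - (Real.exp (2 * β * θ * t))⁻¹ ≠ 0 := by
      rw [show (1 : ℝ) - (Real.exp (2 * β * θ * t))⁻¹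
          = (Real.exp (2 * β * θ * t) - 1) / Real.exp (2 * β * θ * t) by field_simp]
      exact div_ne_zero h1 hE0
    rw [show (1 : ℝ) - (Real.exp (2 * β * θ * t))⁻¹ = (Real.exp (2 * β * θ * t) - 1) / Real.exp (2 * β * θ * t) by field_simp, div_div_eq_mul_div, div_add' _ _ _ h1, div_eq_div_iff h1 h1]
    ring

/-- the key algebraic identity. -/
lemma cc_key {β θ : ℝ} (hβ : 0 < β) {t s : ℝ} (ht : 0 < t) (hs : 0 < s) :
    cc β θ t * cct β θ (s + t) = cct β θ s * (cct β θ t - cct β θ (s + t)) := by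
  unfold cc cct
  rcases eq_or_ne θ 0 with h | h
  · rw [if_pos h, if_pos h, if_pos h, if_pos h]
    have h1 : β * t ≠ 0 := by positivity
    have h2 : β * s ≠ 0 := by positivity
    have h3 : β * (s + t) ≠ 0 := by positivity
    field_simp
    ring
  · rw [if_neg h, if_neg h, if_neg h, if_neg h]
    have key : ∀ τ : ℝ, 0 < τ → (1 : ℝ) - Real.exp (-(2 * β * θ * τ))
        = (Real.exp (2 * β * θ * τ) - 1) / Real.exp (2 * β * θ * τ) := by
      intro τ hτ
      rw [Real.exp_neg]
      field_simp
    have hne : ∀ τ : ℝ, 0 < τ → Real.exp (2 * β * θ * τ) - 1 ≠ 0 := by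
      intro τ hτ
      exact sub_ne_zero.mpr (exp_ne_one_aux hβ h hτ)
    rw [key t ht, key s hs, key (s + t) (by linarith)]
    have hEt := Real.exp_ne_zero (2 * β * θ * t)
    have hEs := Real.exp_ne_zero (2 * β * θ * s)
    have hEst := Real.exp_ne_zero (2 * β * θ * (s + t))
    have h1 := hne t ht
    have h2 := hne s hs
    have h3 := hne (s + t) (by linarith)
    have hadd : Real.exp (2 * β * θ * (s + t))
        = Real.exp (2 * β * θ * s) * Real.exp (2 * β * θ * t) := by
      rw [← Real.exp_add]; ring_nf
    rw [div_div_eq_mul_div, div_div_eq_mul_div, div_div_eq_mul_div, hadd]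
    rw [hadd] at h3
    rw [div_sub_div _ _ h1 h3, div_mul_div_comm, div_mul_div_comm, div_eq_div_iff (mul_ne_zero h1 h3) (mul_ne_zero h2 (mul_ne_zero h1 h3))]
    ring

/-- `∑_{k≥0} z^{k+1}/(k+1)! = e^z - 1`. -/
lemma tsum_shift_eq (z : ℝ) :
    ∑' k : ℕ, z ^ (k + 1) / (Nat.factorial (k + 1) : ℝ) = Real.exp z - 1 := by
  have hs : Summable (fun n : ℕ => z ^ n / (Nat.factorial n : ℝ)) :=
    Real.summable_pow_div_factorial z
  have he : Real.exp z = ∑' n : ℕ, z ^ n / (Nat.factorial n : ℝ) := by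
    rw [Real.exp_eq_exp_ℝ, NormedSpace.exp_eq_tsum_div]
  rw [he, hs.tsum_eq_zero_add]
  simp

/-- integrability of `y^k e^{-a y}` on `(0,∞)`. -/
lemma integrableOn_pow_mul_exp {aa : ℝ} (haa : 0 < aa) (k : ℕ) :
    IntegrableOn (fun y : ℝ => y ^ k * Real.exp (-(aa * y))) (Set.Ioi 0) := by
  apply integrable_of_isBigO_exp_neg (b := aa / 2) (by positivity)
  · exact ((continuous_pow k).mul
      (Real.continuous_exp.comp (continuous_const.mul continuous_id).neg)).continuousOn
  · have h1 : Tendsto (fun y : ℝ => y ^ k * Real.exp (-(aa / 2) * y)) atTop (nhds 0) := by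
      simpa [Real.rpow_natCast] using
        tendsto_rpow_mul_exp_neg_mul_atTop_nhds_zero k (aa / 2) (by positivity)
    have h2 : (fun y : ℝ => y ^ k * Real.exp (-(aa * y)))
        = fun y => (y ^ k * Real.exp (-(aa / 2) * y)) * Real.exp (-(aa / 2) * y) := by
      funext y
      rw [mul_assoc, ← Real.exp_add]
      have : -(aa * y) = -(aa / 2) * y + -(aa / 2) * y := by ring
      rw [this]
    rw [h2]
    simpa using (h1.isBigO_one ℝ).mul
      (Asymptotics.isBigO_refl (fun y : ℝ => Real.exp (-(aa / 2) * y)) atTop)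

/-- `∫_0^∞ y^k e^{-a y} dy = k!/a^{k+1}`. -/
lemma integral_pow_mul_exp {aa : ℝ} (haa : 0 < aa) (k : ℕ) :
    ∫ y in Set.Ioi (0:ℝ), y ^ k * Real.exp (-(aa * y))
      = (Nat.factorial k : ℝ) / aa ^ (k + 1) := by
  have h := Real.integral_rpow_mul_exp_neg_mul_Ioi (show (0:ℝ) < (k:ℝ) + 1 by positivity) haa
  rw [show ((k:ℝ) + 1 - 1) = (k:ℝ) by ring, Real.Gamma_nat_eq_factorial] at h
  rw [show ((k:ℝ) + 1) = ((k + 1 : ℕ) : ℝ) by push_cast; ring] at h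
  simp only [Real.rpow_natCast] at h
  rw [h, div_pow, one_pow]
  ring

/-- the main series integral. -/
lemma integral_series_aux {B C aa : ℝ} (hC : 0 ≤ C) (hB : 0 < B) (haa : 0 < aa) :
    ∫ y in Set.Ioi (0:ℝ), C * Real.exp (-(aa * y)) *
        ∑' k : ℕ, (B * y) ^ k / ((Nat.factorial k : ℝ) * (Nat.factorial (k + 1) : ℝ))
      = C / B * (Real.exp (B / aa) - 1) := by
  set f : ℕ → ℝ → ℝ := fun k y =>
    C * (B ^ k / ((Nat.factorial k : ℝ) * (Nat.factorial (k + 1) : ℝ)))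
      * (y ^ k * Real.exp (-(aa * y))) with hf_def
  have hfint : ∀ k : ℕ, Integrable (f k) (volume.restrict (Set.Ioi 0)) := by
    intro k
    exact (integrableOn_pow_mul_exp haa k).const_mul _
  have hfval : ∀ k : ℕ, ∫ y in Set.Ioi (0:ℝ), f k y
      = C / B * ((B / aa) ^ (k + 1) / (Nat.factorial (k + 1) : ℝ)) := by
    intro k
    simp only [hf_def]
    rw [MeasureTheory.integral_const_mul, integral_pow_mul_exp haa k]
    have hfk : (Nat.factorial k : ℝ) ≠ 0 := Nat.cast_ne_zero.mpr (Nat.factorial_ne_zero k)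
    have hfk1 : (Nat.factorial (k + 1) : ℝ) ≠ 0 := Nat.cast_ne_zero.mpr (Nat.factorial_ne_zero _)
    rw [div_pow]
    field_simp
    ring
  have hnorm : ∀ k : ℕ, (∫ y in Set.Ioi (0:ℝ), ‖f k y‖) = ∫ y in Set.Ioi (0:ℝ), f k y := by
    intro k
    refine setIntegral_congr_fun measurableSet_Ioi fun y hy => ?_
    have hy0 : (0:ℝ) < y := hy
    rw [Real.norm_eq_abs, abs_of_nonneg]
    simp only [hf_def]
    apply mul_nonneg
    · apply mul_nonneg hC
      apply div_nonneg (pow_nonneg hB.le k)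
      positivity
    · exact mul_nonneg (pow_nonneg hy0.le k) (Real.exp_pos _).le
  have hsum : Summable fun k : ℕ => ∫ y in Set.Ioi (0:ℝ), ‖f k y‖ := by
    simp only [hnorm, hfval]
    apply Summable.mul_left
    exact (Real.summable_pow_div_factorial (B / aa)).comp_injective Nat.succ_injective
  have hswap := MeasureTheory.integral_tsum_of_summable_integral_norm hfint hsum
  have hpt : ∀ y : ℝ,
      C * Real.exp (-(aa * y)) *
        ∑' k : ℕ, (B * y) ^ k / ((Nat.factorial k : ℝ) * (Nat.factorial (k + 1) : ℝ))
      = ∑' k : ℕ, f k y := by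
    intro y
    rw [← tsum_mul_left]
    refine tsum_congr fun k => ?_
    simp only [hf_def]
    rw [mul_pow]
    ring
  calc ∫ y in Set.Ioi (0:ℝ), C * Real.exp (-(aa * y)) *
          ∑' k : ℕ, (B * y) ^ k / ((Nat.factorial k : ℝ) * (Nat.factorial (k + 1) : ℝ))
      = ∫ y in Set.Ioi (0:ℝ), ∑' k : ℕ, f k y := by
        exact setIntegral_congr_fun measurableSet_Ioi fun y _ => hpt y
    _ = ∑' k : ℕ, ∫ y in Set.Ioi (0:ℝ), f k y := hswap.symm
    _ = ∑' k : ℕ, C / B * ((B / aa) ^ (k + 1) / (Nat.factorial (k + 1) : ℝ)) :=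
        tsum_congr fun k => hfval k
    _ = C / B * ∑' k : ℕ, (B / aa) ^ (k + 1) / (Nat.factorial (k + 1) : ℝ) := tsum_mul_left
    _ = C / B * (Real.exp (B / aa) - 1) := by rw [tsum_shift_eq]

/-- The space–time function `(t, z) ↦ e^{c̃^θ_{t+r} z}` is harmonic for the CSBP kernels:
for `t, r > 0`, `u ≥ 0` and `x ≥ 0`,
`e^{-x c^θ_t} e^{c̃^θ_{u+t+r}·0} + ∫_0^∞ e^{c̃^θ_{u+t+r} y} q^θ_t(x,y) dy = e^{c̃^θ_{u+r} x}`
(the extinction atom at `0` contributing `e^{-x c^θ_t}`). -/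
theorem exp_cct_harmonic (β θ : ℝ) (hβ : 0 < β) (t r : ℝ) (ht : 0 < t) (hr : 0 < r)
    (u : ℝ) (hu : 0 ≤ u) (x : ℝ) (hx : 0 ≤ x) :
    Real.exp (-(x * cc β θ t)) * Real.exp (cct β θ (u + t + r) * 0) +
      (∫ y in Set.Ioi (0 : ℝ), Real.exp (cct β θ (u + t + r) * y) * qt β θ t x y)
      = Real.exp (cct β θ (u + r) * x) := by
  have hst : u + t + r = (u + r) + t := by ring
  rw [hst]
  set s := u + r with hs_def
  have hs : 0 < s := by rw [hs_def]; linarith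
  set c := cc β θ t with hc_def
  set c' := cct β θ t with hc'_def
  set lam := cct β θ (s + t) with hlam_def
  set mu := cct β θ s with hmu_def
  have hc : 0 < c := cc_pos hβ ht
  have hc' : 0 < c' := cct_pos hβ ht
  have hlam : 0 < lam := cct_pos hβ (by linarith)
  have hmu : 0 < mu := cct_pos hβ hs
  have hkey : c * lam = mu * (c' - lam) := cc_key hβ ht hs
  set aa := c' - lam with haa_def
  have haa : 0 < aa := by nlinarith [mul_pos hc hlam]
  have hcc' : c' = c + 2 * θ := cct_eq_cc_add hβ ht
  rcases eq_or_lt_of_le hx with hx0 | hx0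
  · subst hx0
    simp [qt]
  · set B := x * c * c' with hB_def
    have hB : 0 < B := by positivity
    set C := B * Real.exp (-(x * c)) with hC_def
    have hC : 0 ≤ C := by positivity
    have hpt : ∀ y ∈ Set.Ioi (0:ℝ), Real.exp (lam * y) * qt β θ t x y
        = C * Real.exp (-(aa * y)) *
            ∑' k : ℕ, (B * y) ^ k / ((Nat.factorial k : ℝ) * (Nat.factorial (k + 1) : ℝ)) := by
      intro y hy
      simp only [qt]
      rw [← hc_def, ← hc'_def]
      have hT : (∑' k : ℕ, (x * y * c * c') ^ k /
            ((Nat.factorial k : ℝ) * (Nat.factorial (k + 1) : ℝ)))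
          = ∑' k : ℕ, (B * y) ^ k / ((Nat.factorial k : ℝ) * (Nat.factorial (k + 1) : ℝ)) :=
        tsum_congr fun k => by rw [show x * y * c * c' = B * y by rw [hB_def]; ring]
      rw [hT]
      have hS : Real.exp (lam * y) * Real.exp (-((x + y) * c) - 2 * θ * y)
          = Real.exp (-(x * c)) * Real.exp (-(aa * y)) := by
        rw [← Real.exp_add, ← Real.exp_add]
        congr 1
        rw [haa_def, hcc']
        ring
      generalize (∑' k : ℕ, (B * y) ^ k /
        ((Nat.factorial k : ℝ) * (Nat.factorial (k + 1) : ℝ))) = T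
      rw [hC_def, hB_def]
      linear_combination (x * c * c' * T) * hS
    have hint : (∫ y in Set.Ioi (0:ℝ), Real.exp (lam * y) * qt β θ t x y)
        = C / B * (Real.exp (B / aa) - 1) := by
      rw [setIntegral_congr_fun measurableSet_Ioi hpt]
      exact integral_series_aux hC hB haa
    rw [hint]
    have hCB : C / B = Real.exp (-(x * c)) := by
      rw [hC_def, mul_comm, mul_div_assoc, div_self hB.ne', mul_one]
    rw [hCB, mul_zero, Real.exp_zero, mul_one]
    have hBaa : B / aa - x * c = mu * x := by
      rw [hB_def, haa_def]
      rw [div_sub' (by rw [← haa_def]; exact haa.ne'), div_eq_iff (by rw [← haa_def]; exact haa.ne')]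
      linear_combination x * hkey + x * mu * haa_def
    have hfin : Real.exp (-(x * c)) + Real.exp (-(x * c)) * (Real.exp (B / aa) - 1)
        = Real.exp (-(x * c)) * Real.exp (B / aa) := by ring
    rw [hfin, ← Real.exp_add]
    congr 1
    linarith [hBaa]
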